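/- Suppose W_1,...,W_n are random variables on a finite probability space, S_{i→j} are random variables with H(S_{i→j}|W_i)=0 for 1 ≤ i < j ≤ ℓ (ℓ ≤ n), H(S_{i→j}) ≤ β, H(W_j) ≤ α, and suppose that for each j ≤ ℓ, H(W_j | S_{1→j},...,S_{j-1→j}, W_{j+1},...,W_n) ≤ (d+1−n)β. Then H(W_1,...,W_n) ≤ (n−ℓ)α + C(ℓ,2)β + ℓ(d+1−n)β, where C(ℓ,2) = ℓ(ℓ−1)/2. -/
import Mathlib

open Finset

/-- Shannon entropy of a random variable `Y` on a finite probability space with mass `p`. -/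
noncomputable def entropy {Ω E : Type*} [Fintype Ω] [Fintype E] [DecidableEq E]
    (p : Ω → ℝ) (Y : Ω → E) : ℝ :=
  ∑ y : E, Real.negMulLog (∑ ω : Ω, if Y ω = y then p ω else 0)

namespace Stmt6

variable {Ω : Type*} [Fintype Ω] {p : Ω → ℝ}

/-- The distribution (pushforward mass function) of `Y`. -/
noncomputable def pm {E : Type*} [DecidableEq E] (p : Ω → ℝ) (Y : Ω → E) (y : E) : ℝ :=
  ∑ ω, if Y ω = y then p ω else 0

lemma entropy_eq {E : Type*} [Fintype E] [DecidableEq E] (Y : Ω → E) :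
    entropy p Y = ∑ y, Real.negMulLog (pm p Y y) := rfl

lemma pm_nonneg {E : Type*} [DecidableEq E] (hp : ∀ ω, 0 ≤ p ω) (Y : Ω → E) (y : E) :
    0 ≤ pm p Y y := by
  refine Finset.sum_nonneg fun ω _ => ?_
  split <;> simp [hp ω]

lemma sum_pm {E : Type*} [Fintype E] [DecidableEq E] (Y : Ω → E) :
    ∑ y, pm p Y y = ∑ ω, p ω := by
  unfold pm
  rw [Finset.sum_comm]
  simp [Finset.sum_ite_eq]

lemma pm_comp {E F : Type*} [Fintype E] [DecidableEq E] [DecidableEq F]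
    (Y : Ω → E) (f : E → F) (z : F) :
    pm p (fun ω => f (Y ω)) z = ∑ y ∈ univ.filter (fun y => f y = z), pm p Y y := by
  unfold pm
  rw [Finset.sum_comm]
  refine Finset.sum_congr rfl fun ω _ => ?_
  rw [Finset.sum_filter]
  simp only [← ite_and]
  rw [Finset.sum_eq_single (Y ω)]
  · simp
  · intro y _ hy; simp [Ne.symm hy]
  · simp

lemma pm_pair_fst {A B : Type*} [Fintype B] [DecidableEq A] [DecidableEq B]
    (X : Ω → A) (Z : Ω → B) (x : A) :
    ∑ z, pm p (fun ω => (X ω, Z ω)) (x, z) = pm p X x := by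
  unfold pm
  rw [Finset.sum_comm]
  refine Finset.sum_congr rfl fun ω _ => ?_
  rw [Finset.sum_eq_single (Z ω)]
  · simp [Prod.ext_iff]
  · intro z _ hz; simp [Prod.ext_iff, Ne.symm hz]
  · simp

lemma pm_pair_snd {A B : Type*} [Fintype A] [DecidableEq A] [DecidableEq B]
    (X : Ω → A) (Z : Ω → B) (z : B) :
    ∑ x, pm p (fun ω => (X ω, Z ω)) (x, z) = pm p Z z := by
  unfold pm
  rw [Finset.sum_comm]
  refine Finset.sum_congr rfl fun ω _ => ?_
  rw [Finset.sum_eq_single (X ω)]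
  · simp [Prod.ext_iff]
  · intro x _ hx; simp [Prod.ext_iff, Ne.symm hx]
  · simp

lemma negMulLog_sum_le {ι : Type*} (s : Finset ι) (f : ι → ℝ) (hf : ∀ i ∈ s, 0 ≤ f i) :
    Real.negMulLog (∑ i ∈ s, f i) ≤ ∑ i ∈ s, Real.negMulLog (f i) := by
  have hS : ∀ i ∈ s, f i ≤ ∑ j ∈ s, f j := fun i hi => Finset.single_le_sum hf hi
  have : Real.negMulLog (∑ i ∈ s, f i) = ∑ i ∈ s, -(f i * Real.log (∑ j ∈ s, f j)) := by
    rw [Real.negMulLog, neg_mul, Finset.sum_mul, neg_eq_iff_eq_neg, ← Finset.sum_neg_distrib]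
    simp
  rw [this]
  refine Finset.sum_le_sum fun i hi => ?_
  rcases eq_or_lt_of_le (hf i hi) with h0 | h0
  · simp [← h0, Real.negMulLog]
  · rw [Real.negMulLog, neg_mul]
    have h := Real.log_le_log h0 (hS i hi)
    nlinarith [h, h0]

/-- Data processing: entropy of a function of `Y` is at most the entropy of `Y`. -/
lemma entropy_comp_le {E F : Type*} [Fintype E] [DecidableEq E] [Fintype F] [DecidableEq F]
    (hp : ∀ ω, 0 ≤ p ω) (Y : Ω → E) (f : E → F) :
    entropy p (fun ω => f (Y ω)) ≤ entropy p Y := by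
  rw [entropy_eq, entropy_eq]
  calc ∑ z, Real.negMulLog (pm p (fun ω => f (Y ω)) z)
      ≤ ∑ z, ∑ y ∈ univ.filter (fun y => f y = z), Real.negMulLog (pm p Y y) := by
        refine Finset.sum_le_sum fun z _ => ?_
        rw [pm_comp]
        exact negMulLog_sum_le _ _ fun y _ => pm_nonneg hp Y y
    _ = ∑ y, Real.negMulLog (pm p Y y) := Finset.sum_fiberwise _ _ _

/-- Injective recoding preserves entropy. -/
lemma entropy_comp_inj {E F : Type*} [Fintype E] [DecidableEq E] [Fintype F] [DecidableEq F]
    (Y : Ω → E) (f : E → F) (hf : Function.Injective f) :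
    entropy p (fun ω => f (Y ω)) = entropy p Y := by
  rw [entropy_eq, entropy_eq]
  have h1 : ∀ y : E, pm p (fun ω => f (Y ω)) (f y) = pm p Y y := by
    intro y; unfold pm
    refine Finset.sum_congr rfl fun ω _ => ?_
    simp [hf.eq_iff]
  have hvan : ∀ z ∈ univ, z ∉ univ.image f → Real.negMulLog (pm p (fun ω => f (Y ω)) z) = 0 := by
    intro z _ hz
    have : pm p (fun ω => f (Y ω)) z = 0 := by
      unfold pm
      refine Finset.sum_eq_zero fun ω _ => ?_
      have : f (Y ω) ≠ z := fun h => hz (Finset.mem_image.2 ⟨Y ω, Finset.mem_univ _, h⟩)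
      simp [this]
    simp [this, Real.negMulLog]
  rw [← Finset.sum_subset (Finset.subset_univ (univ.image f)) hvan,
    Finset.sum_image (fun x _ y _ h => hf h)]
  exact Finset.sum_congr rfl fun y _ => by rw [h1]

/-- Subadditivity of entropy. -/
lemma entropy_pair_le {A B : Type*} [Fintype A] [DecidableEq A] [Fintype B] [DecidableEq B]
    (hp : ∀ ω, 0 ≤ p ω) (hp1 : ∑ ω, p ω = 1) (X : Ω → A) (Z : Ω → B) :
    entropy p (fun ω => (X ω, Z ω)) ≤ entropy p X + entropy p Z := by
  set r : A × B → ℝ := pm p (fun ω => (X ω, Z ω)) with hr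
  have hrn : ∀ u, 0 ≤ r u := fun u => pm_nonneg hp _ u
  have hra : ∀ x, ∑ z, r (x, z) = pm p X x := fun x => pm_pair_fst X Z x
  have hrb : ∀ z, ∑ x, r (x, z) = pm p Z z := fun z => pm_pair_snd X Z z
  have han : ∀ x, 0 ≤ pm p X x := fun x => pm_nonneg hp _ x
  have hbn : ∀ z, 0 ≤ pm p Z z := fun z => pm_nonneg hp _ z
  have hX : entropy p X = ∑ u : A × B, r u * (-Real.log (pm p X u.1)) := by
    rw [entropy_eq, Fintype.sum_prod_type]
    refine Finset.sum_congr rfl fun x _ => ?_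
    show Real.negMulLog (pm p X x) = ∑ z, r (x, z) * -Real.log (pm p X x)
    rw [← Finset.sum_mul, hra, Real.negMulLog, neg_mul_comm]
  have hZ : entropy p Z = ∑ u : A × B, r u * (-Real.log (pm p Z u.2)) := by
    rw [entropy_eq, Fintype.sum_prod_type_right]
    refine Finset.sum_congr rfl fun z _ => ?_
    show Real.negMulLog (pm p Z z) = ∑ x, r (x, z) * -Real.log (pm p Z z)
    rw [← Finset.sum_mul, hrb, Real.negMulLog, neg_mul_comm]
  rw [entropy_eq, hX, hZ, ← Finset.sum_add_distrib]
  have key : ∀ u : A × B,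
      Real.negMulLog (r u) ≤ (r u * (-Real.log (pm p X u.1)) + r u * (-Real.log (pm p Z u.2)))
        + (pm p X u.1 * pm p Z u.2 - r u) := by
    intro u
    obtain ⟨x, z⟩ := u
    have hrax : r (x, z) ≤ pm p X x := by
      rw [← hra x]
      exact Finset.single_le_sum (f := fun z => r (x, z)) (fun z _ => hrn _) (Finset.mem_univ z)
    have hrbz : r (x, z) ≤ pm p Z z := by
      rw [← hrb z]
      exact Finset.single_le_sum (f := fun x => r (x, z)) (fun x _ => hrn _) (Finset.mem_univ x)
    rcases eq_or_lt_of_le (hrn (x, z)) with h0 | h0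
    · simp only [← h0, Real.negMulLog_zero]
      nlinarith [han x, hbn z]
    · have hax : 0 < pm p X x := lt_of_lt_of_le h0 hrax
      have hbz : 0 < pm p Z z := lt_of_lt_of_le h0 hrbz
      have hlog : Real.log (pm p X x * pm p Z z / r (x, z))
          ≤ pm p X x * pm p Z z / r (x, z) - 1 :=
        Real.log_le_sub_one_of_pos (by positivity)
      rw [Real.log_div (by positivity) (ne_of_gt h0),
        Real.log_mul (ne_of_gt hax) (ne_of_gt hbz)] at hlog
      have hmul := mul_le_mul_of_nonneg_left hlog (le_of_lt h0)
      rw [Real.negMulLog]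
      have hcan : r (x, z) * (pm p X x * pm p Z z / r (x, z)) = pm p X x * pm p Z z := by
        field_simp
      nlinarith [hmul, hcan]
  have hsum2 : ∑ u : A × B, (pm p X u.1 * pm p Z u.2 - r u) = 0 := by
    rw [Finset.sum_sub_distrib]
    have h1 : ∑ u : A × B, pm p X u.1 * pm p Z u.2 = 1 := by
      rw [Fintype.sum_prod_type]
      simp only [← Finset.mul_sum]
      rw [← Finset.sum_mul, sum_pm X, sum_pm Z, hp1, one_mul]
    have h2 : ∑ u : A × B, r u = 1 := by rw [hr, sum_pm, hp1]
    rw [h1, h2, sub_self]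
  have hle := Finset.sum_le_sum (fun u (_ : u ∈ (univ : Finset (A × B))) => key u)
  rw [Finset.sum_add_distrib, hsum2, add_zero] at hle
  exact hle

lemma entropy_subsingleton {F : Type*} [Fintype F] [DecidableEq F] [Subsingleton F]
    (hp1 : ∑ ω, p ω = 1) (Y : Ω → F) : entropy p Y = 0 := by
  rw [entropy_eq]
  refine Finset.sum_eq_zero fun y _ => ?_
  have hYy : ∀ ω, Y ω = y := fun ω => Subsingleton.elim _ _
  have : pm p Y y = 1 := by
    unfold pm; simp only [hYy, if_true]; exact hp1
  simp [this]

lemma entropy_tuple_insert {E : Type*} [Fintype E] [DecidableEq E]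
    (X : ℕ → Ω → E) (a : ℕ) (s : Finset ℕ) (ha : a ∉ s) :
    entropy p (fun ω => fun i : ↥(insert a s) => X i.1 ω)
      = entropy p (fun ω => (X a ω, fun i : ↥s => X i.1 ω)) := by
  let f : (↥(insert a s) → E) → E × (↥s → E) :=
    fun g => (g ⟨a, Finset.mem_insert_self a s⟩, fun i => g ⟨i.1, Finset.mem_insert_of_mem i.2⟩)
  have hf : Function.Injective f := by
    intro g₁ g₂ h
    rw [Prod.ext_iff] at h
    obtain ⟨h1, h2⟩ := h
    funext i
    obtain ⟨i, hi⟩ := i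
    rcases Finset.mem_insert.1 hi with rfl | hi'
    · exact h1
    · exact congrFun h2 ⟨i, hi'⟩
  exact (entropy_comp_inj (fun ω => fun i : ↥(insert a s) => X i.1 ω) f hf).symm

lemma entropy_tuple_le {E : Type*} [Fintype E] [DecidableEq E]
    (hp : ∀ ω, 0 ≤ p ω) (hp1 : ∑ ω, p ω = 1) (X : ℕ → Ω → E) (s : Finset ℕ) :
    entropy p (fun ω => fun i : ↥s => X i.1 ω) ≤ ∑ i ∈ s, entropy p (X i) := by
  induction s using Finset.induction with
  | empty =>
      haveI : Subsingleton (↥(∅ : Finset ℕ) → E) :=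
        ⟨fun f g => funext fun i => absurd i.2 (Finset.notMem_empty _)⟩
      rw [entropy_subsingleton hp1]
      simp
  | @insert a s ha ih =>
      rw [entropy_tuple_insert X a s ha, Finset.sum_insert ha]
      calc entropy p (fun ω => (X a ω, fun i : ↥s => X i.1 ω))
          ≤ entropy p (X a) + entropy p (fun ω => fun i : ↥s => X i.1 ω) :=
            entropy_pair_le hp hp1 _ _
        _ ≤ entropy p (X a) + ∑ i ∈ s, entropy p (X i) := by linarith [ih]

lemma gauss_sum (m : ℕ) : ∑ j ∈ Icc 1 m, ((j : ℝ) - 1) = (m : ℝ) * ((m : ℝ) - 1) / 2 := by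
  induction m with
  | zero => simp
  | succ m ih =>
      rw [Finset.sum_Icc_succ_top (Nat.one_le_iff_ne_zero.2 (Nat.succ_ne_zero m)), ih]
      push_cast
      ring

end Stmt6
/-- the functional-repair outer bound `B(n) ≤ B_ℓ(n)`:
under the determinism, size and repair hypotheses,
`H(W_1,...,W_n) ≤ (n−ℓ)α + C(ℓ,2)β + ℓ(d+1−n)β`. -/
theorem stmt6 {Ω E : Type*} [Fintype Ω] [Fintype E] [DecidableEq E]
    (p : Ω → ℝ) (hp : ∀ ω, 0 ≤ p ω) (hp1 : ∑ ω : Ω, p ω = 1)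
    (W : ℕ → Ω → E) (S : ℕ → ℕ → Ω → E)
    (n ℓ d : ℕ) (hln : ℓ ≤ n) (hnd : n ≤ d + 1)
    (α β : ℝ) (hα : 0 ≤ α) (hβ : 0 ≤ β)
    (hdet : ∀ i j, 1 ≤ i → i < j → j ≤ ℓ →
      entropy p (fun ω => (S i j ω, W i ω)) - entropy p (W i) = 0)
    (hSβ : ∀ i j, 1 ≤ i → i < j → j ≤ ℓ → entropy p (S i j) ≤ β)
    (hWα : ∀ i, 1 ≤ i → i ≤ n → entropy p (W i) ≤ α)
    (hrep : ∀ j, 1 ≤ j → j ≤ ℓ →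
      entropy p (fun ω =>
          (W j ω, fun i : ↥(Finset.Icc 1 (j-1)) => S i.1 j ω,
            fun m : ↥(Finset.Icc (j+1) n) => W m.1 ω))
        - entropy p (fun ω =>
          (fun i : ↥(Finset.Icc 1 (j-1)) => S i.1 j ω,
            fun m : ↥(Finset.Icc (j+1) n) => W m.1 ω))
      ≤ ((d : ℝ) + 1 - (n : ℝ)) * β) :
    entropy p (fun ω => fun i : ↥(Finset.Icc 1 n) => W i.1 ω)
    ≤ ((n : ℝ) - (ℓ : ℝ)) * α + (ℓ : ℝ) * ((ℓ : ℝ) - 1) / 2 * β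
      + (ℓ : ℝ) * ((d : ℝ) + 1 - (n : ℝ)) * β := by
  classical
  set D : ℝ := (d : ℝ) + 1 - (n : ℝ) with hD
  -- single step of the chain
  have step : ∀ j, 1 ≤ j → j ≤ ℓ →
      entropy p (fun ω => fun i : ↥(Finset.Icc j n) => W i.1 ω)
        ≤ (((j : ℝ) - 1) * β + D * β)
          + entropy p (fun ω => fun i : ↥(Finset.Icc (j+1) n) => W i.1 ω) := by
    intro j hj hjl
    have hjn : j ≤ n := le_trans hjl hln
    have hIcc : Finset.Icc j n = insert j (Finset.Icc (j+1) n) := by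
      rw [Finset.Icc_add_one_left_eq_Ioc, Finset.Icc_eq_cons_Ioc hjn, Finset.cons_eq_insert]
    have hjmem : j ∉ Finset.Icc (j+1) n := by simp [Finset.mem_Icc]
    rw [hIcc, Stmt6.entropy_tuple_insert W j _ hjmem]
    have h2 : entropy p (fun ω => (W j ω, fun i : ↥(Finset.Icc (j+1) n) => W i.1 ω))
        ≤ entropy p (fun ω =>
            (W j ω, fun i : ↥(Finset.Icc 1 (j-1)) => S i.1 j ω,
              fun m : ↥(Finset.Icc (j+1) n) => W m.1 ω)) :=
      Stmt6.entropy_comp_le hp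
        (fun ω => (W j ω, fun i : ↥(Finset.Icc 1 (j-1)) => S i.1 j ω,
          fun m : ↥(Finset.Icc (j+1) n) => W m.1 ω))
        (fun u => (u.1, u.2.2))
    have h3 := hrep j hj hjl
    have h4 : entropy p (fun ω =>
          (fun i : ↥(Finset.Icc 1 (j-1)) => S i.1 j ω,
            fun m : ↥(Finset.Icc (j+1) n) => W m.1 ω))
        ≤ entropy p (fun ω => fun i : ↥(Finset.Icc 1 (j-1)) => S i.1 j ω)
          + entropy p (fun ω => fun m : ↥(Finset.Icc (j+1) n) => W m.1 ω) :=
      Stmt6.entropy_pair_le hp hp1 _ _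
    have h5 : entropy p (fun ω => fun i : ↥(Finset.Icc 1 (j-1)) => S i.1 j ω)
        ≤ ((j : ℝ) - 1) * β := by
      calc entropy p (fun ω => fun i : ↥(Finset.Icc 1 (j-1)) => S i.1 j ω)
          ≤ ∑ i ∈ Finset.Icc 1 (j-1), entropy p (S i j) :=
            Stmt6.entropy_tuple_le hp hp1 (fun i => S i j) _
        _ ≤ ∑ _i ∈ Finset.Icc 1 (j-1), β := by
            refine Finset.sum_le_sum fun i hi => ?_
            rw [Finset.mem_Icc] at hi
            exact hSβ i j hi.1 (by omega) hjl
        _ = ((j : ℝ) - 1) * β := by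
            rw [Finset.sum_const, Nat.card_Icc]
            have : ((j - 1 + 1 - 1 : ℕ) : ℝ) = (j : ℝ) - 1 := by
              have : j - 1 + 1 - 1 = j - 1 := by omega
              rw [this, Nat.cast_sub hj, Nat.cast_one]
            rw [nsmul_eq_mul, this]
    linarith
  -- tail bound
  have tail : entropy p (fun ω => fun i : ↥(Finset.Icc (ℓ+1) n) => W i.1 ω)
      ≤ ((n : ℝ) - (ℓ : ℝ)) * α := by
    calc entropy p (fun ω => fun i : ↥(Finset.Icc (ℓ+1) n) => W i.1 ω)
        ≤ ∑ i ∈ Finset.Icc (ℓ+1) n, entropy p (W i) :=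
          Stmt6.entropy_tuple_le hp hp1 W _
      _ ≤ ∑ _i ∈ Finset.Icc (ℓ+1) n, α := by
          refine Finset.sum_le_sum fun i hi => ?_
          rw [Finset.mem_Icc] at hi
          exact hWα i (by omega) hi.2
      _ = ((n : ℝ) - (ℓ : ℝ)) * α := by
          rw [Finset.sum_const, Nat.card_Icc, nsmul_eq_mul]
          have : ((n + 1 - (ℓ + 1) : ℕ) : ℝ) = (n : ℝ) - (ℓ : ℝ) := by
            have h : n + 1 - (ℓ + 1) = n - ℓ := by omega
            rw [h, Nat.cast_sub hln]
          rw [this]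
  -- main downward induction
  have main : ∀ k, k ≤ ℓ →
      entropy p (fun ω => fun i : ↥(Finset.Icc (ℓ - k + 1) n) => W i.1 ω)
        ≤ ((n : ℝ) - (ℓ : ℝ)) * α
          + ∑ j ∈ Finset.Icc (ℓ - k + 1) ℓ, (((j : ℝ) - 1) * β + D * β) := by
    intro k
    induction k with
    | zero =>
        intro _
        rw [Nat.sub_zero]
        have : Finset.Icc (ℓ + 1) ℓ = ∅ := Finset.Icc_eq_empty (by omega)
        rw [this, Finset.sum_empty, add_zero]
        exact tail
    | succ k ih =>
        intro hk
        have hk' : k ≤ ℓ := le_of_lt hk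
        have hj1 : ℓ - (k + 1) + 1 = ℓ - k := by omega
        rw [hj1]
        set j := ℓ - k with hjdef
        have hj : 1 ≤ j := by omega
        have hjl : j ≤ ℓ := by omega
        have hsum : ∑ i ∈ Finset.Icc j ℓ, (((i : ℝ) - 1) * β + D * β)
            = (((j : ℝ) - 1) * β + D * β)
              + ∑ i ∈ Finset.Icc (j+1) ℓ, (((i : ℝ) - 1) * β + D * β) := by
          rw [Finset.Icc_add_one_left_eq_Ioc, Finset.Icc_eq_cons_Ioc hjl, Finset.sum_cons]
        have hih := ih hk'
        have : ℓ - k + 1 = j + 1 := by omega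
        rw [this] at hih
        have hstep := step j hj hjl
        rw [hsum]
        linarith
  have hmain := main ℓ le_rfl
  rw [Nat.sub_self] at hmain
  have hsumsplit : ∑ j ∈ Finset.Icc (0 + 1) ℓ, (((j : ℝ) - 1) * β + D * β)
      = (ℓ : ℝ) * ((ℓ : ℝ) - 1) / 2 * β + (ℓ : ℝ) * (D * β) := by
    rw [Finset.sum_add_distrib, ← Finset.sum_mul, zero_add, Stmt6.gauss_sum,
      Finset.sum_const, Nat.card_Icc, nsmul_eq_mul]
    have : ((ℓ + 1 - 1 : ℕ) : ℝ) = (ℓ : ℝ) := by norm_num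
    rw [this]
  rw [hsumsplit] at hmain
  calc entropy p (fun ω => fun i : ↥(Finset.Icc 1 n) => W i.1 ω)
      ≤ ((n : ℝ) - (ℓ : ℝ)) * α + ((ℓ : ℝ) * ((ℓ : ℝ) - 1) / 2 * β + (ℓ : ℝ) * (D * β)) := by
        have : (0 + 1 : ℕ) = 1 := by norm_num
        rw [this] at hmain
        exact hmain
    _ = ((n : ℝ) - (ℓ : ℝ)) * α + (ℓ : ℝ) * ((ℓ : ℝ) - 1) / 2 * β
        + (ℓ : ℝ) * ((d : ℝ) + 1 - (n : ℝ)) * β := by rw [hD]; ring
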